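/- Let a_1, …, a_n > 0 with weights p_1, …, p_n > 0 summing to at most 1, and let A = max_i a_i. Let q₁(P̄) solve A · E_1(A/q₁) = P̄ and q₂(P̄) solve Σ_i a_i p_i E_1(a_i/q₂) = P̄. Then both q₁(P̄) and q₂(P̄) tend to ∞ as P̄ → ∞, and ln q₂(P̄) / ln q₁(P̄) → A / (Σ_i a_i p_i) ≥ 1. -/

import Mathlib

open MeasureTheory Real Filter Finset Topology
noncomputable def E1 (x : ℝ) : ℝ := ∫ t in Set.Ioi x, Real.exp (-t) / t

lemma E1_integrable {x : ℝ} (hx : 0 < x) :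
    IntegrableOn (fun t => Real.exp (-t) / t) (Set.Ioi x) := by
  have h := exp_neg_integrableOn_Ioi x (b := 1) one_pos
  simp only [neg_mul, one_mul] at h
  refine Integrable.mono (h.const_mul (1/x)) ?_ ?_
  · exact ((Real.measurable_exp.comp measurable_neg).div measurable_id).aestronglyMeasurable
  · filter_upwards [ae_restrict_mem measurableSet_Ioi] with t ht
    have ht' : x < t := ht
    have h0 : 0 < t := hx.trans ht'
    rw [Real.norm_eq_abs, Real.norm_eq_abs, abs_of_nonneg (by positivity),
      abs_of_nonneg (by positivity)]
    rw [div_le_iff₀ h0, one_div, mul_comm, ← mul_assoc]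
    calc Real.exp (-t) = (1:ℝ) * Real.exp (-t) := (one_mul _).symm
      _ ≤ t * x⁻¹ * Real.exp (-t) := by
          apply mul_le_mul_of_nonneg_right _ (Real.exp_nonneg _)
          rw [← div_eq_mul_inv, le_div_iff₀ hx, one_mul]; exact ht'.le

lemma E1_nonneg {x : ℝ} (hx : 0 < x) : 0 ≤ E1 x := by
  apply setIntegral_nonneg measurableSet_Ioi
  intro t ht
  have : 0 < t := hx.trans ht
  positivity

lemma E1_anti {x y : ℝ} (hx : 0 < x) (hxy : x ≤ y) : E1 y ≤ E1 x := by
  apply setIntegral_mono_set (E1_integrable hx)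
  · filter_upwards [ae_restrict_mem measurableSet_Ioi] with t ht
    have : 0 < t := hx.trans ht
    positivity
  · exact HasSubset.Subset.eventuallyLE (Set.Ioi_subset_Ioi hxy)

lemma E1_log_bound {x : ℝ} (hx : 0 < x) (hx1 : x ≤ 1) :
    |E1 x + Real.log x| ≤ 1 + |E1 1| := by
  have hsplit : E1 x = (∫ t in Set.Ioc x 1, Real.exp (-t) / t) + E1 1 := by
    rw [E1, E1, ← setIntegral_union (Set.Ioc_disjoint_Ioi le_rfl) measurableSet_Ioi
      ((E1_integrable hx).mono_set Set.Ioc_subset_Ioi_self) (E1_integrable one_pos),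
      Set.Ioc_union_Ioi_eq_Ioi hx1]
  have hone : (∫ t in Set.Ioc x 1, (1:ℝ) / t) = - Real.log x := by
    have := intervalIntegral.integral_of_le (f := fun t => (1:ℝ)/t) (μ := volume) hx1
    rw [← this, integral_one_div, Real.log_div one_ne_zero hx.ne']
    · simp
    · intro h
      rcases Set.mem_uIcc.1 h with ⟨h1, _⟩ | ⟨_, h2⟩
      · exact absurd h1 (not_le.2 hx)
      · linarith
  have hint1 : IntegrableOn (fun t => (1:ℝ) / t) (Set.Ioc x 1) := by
    have : IntervalIntegrable (fun t => (1:ℝ)/t) volume x 1 := by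
      apply intervalIntegral.intervalIntegrable_one_div (f := fun t => t)
      · intro t ht hbad
        rcases Set.mem_uIcc.1 ht with ⟨h1, _⟩ | ⟨_, h2⟩
        · rw [hbad] at h1; exact absurd h1 (not_le.2 hx)
        · rw [hbad] at h2; linarith
      · exact continuousOn_id
    rw [intervalIntegrable_iff_integrableOn_Ioc_of_le hx1] at this
    exact this
  have hintE : IntegrableOn (fun t => Real.exp (-t) / t) (Set.Ioc x 1) :=
    (E1_integrable hx).mono_set Set.Ioc_subset_Ioi_self
  have key : E1 x + Real.log x
      = (∫ t in Set.Ioc x 1, (Real.exp (-t) / t - 1 / t)) + E1 1 := by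
    rw [integral_sub hintE hint1, hone, hsplit]; ring
  rw [key]
  have hb : ‖∫ t in Set.Ioc x 1, (Real.exp (-t) / t - 1 / t)‖ ≤ 1 := by
    have := norm_setIntegral_le_of_norm_le_const (μ := volume)
      (s := Set.Ioc x 1) (C := 1) (f := fun t => Real.exp (-t) / t - 1 / t)
      (by rw [Real.volume_Ioc]; exact ENNReal.ofReal_lt_top)
      (fun t ht => by
        have h0 : 0 < t := hx.trans ht.1
        show ‖Real.exp (-t) / t - 1 / t‖ ≤ 1
        rw [Real.norm_eq_abs, ← neg_sub, abs_neg, ← sub_div,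
          abs_of_nonneg (by
            apply div_nonneg _ h0.le
            simpa using Real.exp_le_exp.2 (by linarith : -t ≤ 0))]
        rw [div_le_one h0]
        nlinarith [Real.add_one_le_exp (-t)])
    calc ‖∫ t in Set.Ioc x 1, (Real.exp (-t) / t - 1 / t)‖
        ≤ 1 * (volume (Set.Ioc x 1)).toReal := this
      _ ≤ 1 := by
          rw [one_mul, Real.volume_Ioc, ENNReal.toReal_ofReal_eq_iff.2 (by linarith)]
          linarith
  calc |(∫ t in Set.Ioc x 1, (Real.exp (-t) / t - 1 / t)) + E1 1|
      ≤ |∫ t in Set.Ioc x 1, (Real.exp (-t) / t - 1 / t)| + |E1 1| := abs_add_le _ _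
    _ ≤ 1 + |E1 1| := by
        have := hb; rw [Real.norm_eq_abs] at this; linarith

theorem stmt15 (n : ℕ) (hn : 0 < n) (a p : Fin n → ℝ)
    (ha : ∀ i, 0 < a i) (hp : ∀ i, 0 < p i) (hpsum : ∑ i, p i ≤ 1)
    (A : ℝ) (hA : haveI : Nonempty (Fin n) := Fin.pos_iff_nonempty.mp hn
      A = Finset.univ.sup' Finset.univ_nonempty a)
    (q₁ q₂ : ℝ → ℝ)
    (hq₁ : ∀ Pbar : ℝ, 0 < Pbar → 0 < q₁ Pbar ∧ A * E1 (A / q₁ Pbar) = Pbar)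
    (hq₂ : ∀ Pbar : ℝ, 0 < Pbar →
      0 < q₂ Pbar ∧ (∑ i, a i * p i * E1 (a i / q₂ Pbar)) = Pbar) :
    Tendsto q₁ atTop atTop ∧ Tendsto q₂ atTop atTop ∧
    Tendsto (fun Pbar : ℝ => Real.log (q₂ Pbar) / Real.log (q₁ Pbar)) atTop
      (nhds (A / ∑ i, a i * p i)) ∧
    1 ≤ A / ∑ i, a i * p i := by
  haveI : Nonempty (Fin n) := Fin.pos_iff_nonempty.mp hn
  -- basic facts about A
  have haA : ∀ i, a i ≤ A := fun i => hA ▸ Finset.le_sup' a (Finset.mem_univ i)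
  obtain ⟨i₀⟩ := (inferInstance : Nonempty (Fin n))
  have hA0 : 0 < A := lt_of_lt_of_le (ha i₀) (haA i₀)
  set S : ℝ := ∑ i, a i * p i with hS_def
  have hS : 0 < S := Finset.sum_pos (fun i _ => mul_pos (ha i) (hp i)) ⟨i₀, Finset.mem_univ i₀⟩
  have hSA : S ≤ A := by
    calc S ≤ ∑ i, A * p i := Finset.sum_le_sum fun i _ =>
            mul_le_mul_of_nonneg_right (haA i) (hp i).le
      _ = A * ∑ i, p i := by rw [Finset.mul_sum]
      _ ≤ A * 1 := mul_le_mul_of_nonneg_left hpsum hA0.le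
      _ = A := mul_one A
  set amin : ℝ := Finset.univ.inf' Finset.univ_nonempty a with hamin_def
  have hamin0 : 0 < amin := by
    obtain ⟨j, _, hj⟩ := Finset.exists_mem_eq_inf' Finset.univ_nonempty a
    rw [hamin_def, hj]; exact ha j
  have haminle : ∀ i, amin ≤ a i := fun i => Finset.inf'_le a (Finset.mem_univ i)
  -- q₁ → ∞
  have htend1 : Tendsto q₁ atTop atTop := by
    rw [tendsto_atTop]
    intro M
    filter_upwards [eventually_gt_atTop (max 0 (A * E1 (A / max M 1)))] with P hP
    have hP0 : 0 < P := lt_of_le_of_lt (le_max_left _ _) hP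
    obtain ⟨hq0, hqe⟩ := hq₁ P hP0
    by_contra hcon
    push_neg at hcon
    have hqM : q₁ P ≤ max M 1 := hcon.le.trans (le_max_left _ _)
    have h1 : A / max M 1 ≤ A / q₁ P := by
      apply div_le_div_of_nonneg_left hA0.le hq0 hqM
    have h2 : E1 (A / q₁ P) ≤ E1 (A / max M 1) :=
      E1_anti (by positivity) h1
    have : P ≤ A * E1 (A / max M 1) := by
      rw [← hqe]; exact mul_le_mul_of_nonneg_left h2 hA0.le
    exact absurd this (not_le.2 (lt_of_le_of_lt (le_max_right _ _) hP))
  -- q₂ → ∞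
  have htend2 : Tendsto q₂ atTop atTop := by
    rw [tendsto_atTop]
    intro M
    filter_upwards [eventually_gt_atTop (max 0 (S * E1 (amin / max M 1)))] with P hP
    have hP0 : 0 < P := lt_of_le_of_lt (le_max_left _ _) hP
    obtain ⟨hq0, hqe⟩ := hq₂ P hP0
    by_contra hcon
    push_neg at hcon
    have hqM : q₂ P ≤ max M 1 := hcon.le.trans (le_max_left _ _)
    have hsumle : P ≤ S * E1 (amin / max M 1) := by
      rw [← hqe, hS_def, Finset.sum_mul]
      apply Finset.sum_le_sum
      intro i _
      apply mul_le_mul_of_nonneg_left _ (mul_pos (ha i) (hp i)).le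
      calc E1 (a i / q₂ P) ≤ E1 (amin / q₂ P) :=
            E1_anti (div_pos hamin0 hq0) (by gcongr; exact haminle i)
        _ ≤ E1 (amin / max M 1) := E1_anti (by positivity)
            (div_le_div_of_nonneg_left hamin0.le hq0 hqM)
    exact absurd hsumle (not_le.2 (lt_of_le_of_lt (le_max_right _ _) hP))
  set C : ℝ := 1 + |E1 1| with hC_def
  have hC0 : 0 < C := by positivity
  set D : ℝ := ∑ i, a i * p i * Real.log (a i) with hD_def
  have h1lim : Tendsto (fun P => Real.log (q₁ P) / P) atTop (𝓝 (1/A)) := by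
    rw [tendsto_iff_dist_tendsto_zero]
    apply squeeze_zero' (Eventually.of_forall fun P => dist_nonneg)
      (g := fun P => (C + |Real.log A|) / P)
    · filter_upwards [eventually_gt_atTop (0:ℝ), htend1.eventually_ge_atTop A] with P hP0 hPA
      obtain ⟨hq0, hqe⟩ := hq₁ P hP0
      have hE : E1 (A / q₁ P) = P / A := by
        rw [eq_div_iff hA0.ne', mul_comm]; exact hqe
      have hb := E1_log_bound (div_pos hA0 hq0) (by rw [div_le_one hq0]; exact hPA)
      rw [hE, Real.log_div hA0.ne' hq0.ne'] at hb
      rw [Real.dist_eq]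
      have heq : Real.log (q₁ P) / P - 1/A
          = (-(P/A + (Real.log A - Real.log (q₁ P))) + Real.log A) / P := by
        field_simp
        ring
      rw [heq, abs_div, abs_of_pos hP0]
      gcongr
      calc |(-(P/A + (Real.log A - Real.log (q₁ P))) + Real.log A)|
          ≤ |(-(P/A + (Real.log A - Real.log (q₁ P))))| + |Real.log A| := abs_add_le _ _
        _ ≤ C + |Real.log A| := by rw [abs_neg]; linarith
    · exact tendsto_const_nhds.div_atTop tendsto_id
  have h2lim : Tendsto (fun P => Real.log (q₂ P) / P) atTop (𝓝 (1/S)) := by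
    rw [tendsto_iff_dist_tendsto_zero]
    apply squeeze_zero' (Eventually.of_forall fun P => dist_nonneg)
      (g := fun P => ((C * S + |D|) / S) / P)
    · filter_upwards [eventually_gt_atTop (0:ℝ), htend2.eventually_ge_atTop A] with P hP0 hPA
      obtain ⟨hq0, hqe⟩ := hq₂ P hP0
      have hbi : ∀ i, |E1 (a i / q₂ P) + (Real.log (a i) - Real.log (q₂ P))| ≤ C := by
        intro i
        have := E1_log_bound (div_pos (ha i) hq0)
          (by rw [div_le_one hq0]; exact (haA i).trans hPA)
        rwa [Real.log_div (ha i).ne' hq0.ne'] at this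
      have key : |P + D - S * Real.log (q₂ P)| ≤ C * S := by
        have expand : (∑ i, a i * p i * (E1 (a i / q₂ P)
              + (Real.log (a i) - Real.log (q₂ P))))
            = P + D - S * Real.log (q₂ P) := by
          simp only [mul_add, mul_sub, Finset.sum_add_distrib, Finset.sum_sub_distrib,
            ← Finset.sum_mul]
          rw [hqe, hD_def, hS_def]
          ring
        rw [← expand]
        calc |∑ i, a i * p i * (E1 (a i / q₂ P) + (Real.log (a i) - Real.log (q₂ P)))|
            ≤ ∑ i, |a i * p i * (E1 (a i / q₂ P) + (Real.log (a i) - Real.log (q₂ P)))| :=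
              Finset.abs_sum_le_sum_abs _ _
          _ ≤ ∑ i, a i * p i * C := Finset.sum_le_sum fun i _ => by
              rw [abs_mul, abs_of_nonneg (mul_pos (ha i) (hp i)).le]
              exact mul_le_mul_of_nonneg_left (hbi i) (mul_pos (ha i) (hp i)).le
          _ = C * S := by rw [← Finset.sum_mul, hS_def, mul_comm]
      rw [Real.dist_eq]
      have heq : Real.log (q₂ P) / P - 1/S
          = (-(P + D - S * Real.log (q₂ P)) + D) / (S * P) := by
        field_simp
        ring
      rw [heq, abs_div, abs_of_pos (mul_pos hS hP0), div_div]
      gcongr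
      calc |(-(P + D - S * Real.log (q₂ P)) + D)|
          ≤ |(-(P + D - S * Real.log (q₂ P)))| + |D| := abs_add_le _ _
        _ ≤ C * S + |D| := by rw [abs_neg]; linarith
    · exact tendsto_const_nhds.div_atTop tendsto_id
  have hratio := h2lim.div h1lim (by positivity : (1:ℝ)/A ≠ 0)
  have heqv : (fun P => (Real.log (q₂ P) / P) / (Real.log (q₁ P) / P))
      =ᶠ[atTop] (fun P => Real.log (q₂ P) / Real.log (q₁ P)) := by
    filter_upwards [eventually_ne_atTop (0:ℝ)] with P hP
    rcases eq_or_ne (Real.log (q₁ P)) 0 with h | h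
    · simp [h]
    · field_simp
  have hAS : (1/S) / (1/A) = A / S := by
    field_simp
  rw [hAS] at hratio
  exact ⟨htend1, htend2, hratio.congr' heqv, (one_le_div hS).2 hSA⟩
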